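/- For Re ν > -1/2 and |y| < 1: J_ν(π y/2) = (1/(√π Γ(ν+1/2))) · (π y/4)^ν (1-y²)^{ν+1/2} · ∫_{-1}^{1} (1-u²)^{ν-1/2}/(1+u y)^{2ν+1} · sin((π/2)·(1-y²)/(1+u y)) du. -/

import Mathlib

open MeasureTheory Real

/-- Bessel function of the first kind, via its power series. -/
noncomputable def besselJ (ν x : ℝ) : ℝ :=
  ∑' m : ℕ, (-1 : ℝ) ^ m * (x / 2) ^ (ν + 2 * m) / (m.factorial * Real.Gamma (ν + m + 1))

lemma rpow_split (x ν : ℝ) (hν : ν > -1/2) (m : ℕ) :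
    x ^ (ν + 2 * (m:ℝ)) = x ^ ν * (x ^ 2) ^ m := by
  rcases lt_trichotomy x 0 with hx | hx | hx
  · have hx' : (0:ℝ) < |x| := abs_pos.mpr hx.ne
    have h2 : (x ^ 2) ^ m = Real.exp (Real.log x * (2 * m)) := by
      have : (x ^ 2) ^ m = |x| ^ ((2*m : ℕ):ℝ) := by
        rw [← sq_abs, ← pow_mul, Real.rpow_natCast]
      rw [this, Real.rpow_def_of_pos hx', Real.log_abs]
      push_cast; ring_nf
    have h1 : Real.cos ((ν + 2 * (m:ℝ)) * π) = Real.cos (ν * π) := by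
      have : (ν + 2 * (m:ℝ)) * π = ν * π + (m:ℤ) * (2 * π) := by push_cast; ring
      rw [this, Real.cos_add_int_mul_two_pi]
    rw [Real.rpow_def_of_neg hx, Real.rpow_def_of_neg hx, h1, h2, mul_add, Real.exp_add]
    ring
  · subst hx
    rcases Nat.eq_zero_or_pos m with rfl | hm
    · norm_num
    · have h1 : ν + 2 * (m:ℝ) ≠ 0 := by
        have : (1:ℝ) ≤ (m:ℝ) := by exact_mod_cast hm
        nlinarith
      rw [Real.zero_rpow h1]
      have h2 : ((0:ℝ)^2)^m = 0 := by
        simp [zero_pow hm.ne']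
      rw [h2, mul_zero]
  · rw [Real.rpow_add hx, ← Real.rpow_natCast (x^2) m, ← Real.rpow_natCast x 2,
      ← Real.rpow_mul hx.le]
    push_cast; ring_nf

lemma gamma_half_nat (m : ℕ) :
    Real.Gamma ((m:ℝ) + 1/2) = Real.sqrt π * (2*m).factorial / (4^m * m.factorial) := by
  induction m with
  | zero =>
    rw [show ((0:ℕ):ℝ) + 1/2 = 1/2 by norm_num, Real.Gamma_one_half_eq]; norm_num
  | succ n ih =>
    have h : ((n:ℝ)+1) + 1/2 = ((n:ℝ) + 1/2) + 1 := by ring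
    push_cast
    rw [h, Real.Gamma_add_one (by positivity), ih]
    have h4 : (4:ℝ)^(n+1) = 4 * 4^n := by ring
    push_cast [Nat.factorial_succ, Nat.mul_succ, Nat.factorial_succ]
    field_simp
    ring

lemma real_beta {a b : ℝ} (ha : 0 < a) (hb : 0 < b) :
    ∫ x in (0:ℝ)..1, x ^ (a-1) * (1-x) ^ (b-1) =
      Real.Gamma a * Real.Gamma b / Real.Gamma (a+b) := by
  have key := Complex.Gamma_mul_Gamma_eq_betaIntegral
    (s := (a:ℂ)) (t := (b:ℂ)) (by simpa using ha) (by simpa using hb)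
  have hI : Complex.betaIntegral a b =
      ((∫ x in (0:ℝ)..1, x ^ (a-1) * (1-x) ^ (b-1) : ℝ) : ℂ) := by
    rw [Complex.betaIntegral, ← intervalIntegral.integral_ofReal]
    apply intervalIntegral.integral_congr
    intro x hx
    rw [Set.uIcc_of_le (by norm_num : (0:ℝ) ≤ 1)] at hx
    obtain ⟨h0, h1⟩ := hx
    show (x:ℂ) ^ ((a:ℂ)-1) * (1 - (x:ℂ)) ^ ((b:ℂ)-1) = ((x ^ (a-1) * (1-x) ^ (b-1) : ℝ) : ℂ)
    rw [show ((a:ℂ)-1) = ((a-1:ℝ):ℂ) by push_cast; ring,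
      show ((b:ℂ)-1) = ((b-1:ℝ):ℂ) by push_cast; ring,
      show (1 - (x:ℂ)) = ((1-x:ℝ):ℂ) by push_cast; ring,
      ← Complex.ofReal_cpow h0, ← Complex.ofReal_cpow (by linarith : (0:ℝ) ≤ 1 - x),
      ← Complex.ofReal_mul]
  have hG : Real.Gamma (a+b) ≠ 0 := (Real.Gamma_pos_of_pos (by linarith)).ne'
  rw [hI, ← Complex.ofReal_add, Complex.Gamma_ofReal, Complex.Gamma_ofReal,
    Complex.Gamma_ofReal] at key
  have : (↑(Real.Gamma a * Real.Gamma b) : ℂ) =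
      ↑(Real.Gamma (a+b) * ∫ x in (0:ℝ)..1, x ^ (a-1) * (1-x) ^ (b-1)) := by
    push_cast; exact key
  have := Complex.ofReal_injective this
  field_simp
  linarith [this]

lemma meas_aux (ν : ℝ) : Measurable (fun t : ℝ => (1-t^2)^(ν-1/2)) := by
  have : Measurable fun t : ℝ => (1 - t^2) := by measurability
  exact this.pow_const _

lemma intInt {ν : ℝ} (hν : -1/2 < ν) :
    IntervalIntegrable (fun t : ℝ => (1-t^2)^(ν-1/2)) volume (-1) 1 := by
  set r := ν - 1/2 with hr
  have hr1 : -1 < r := by rw [hr]; linarith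
  set C := max 1 ((2:ℝ)^r) with hC
  have hC1 : (1:ℝ) ≤ C := le_max_left _ _
  have h2 : IntervalIntegrable (fun t : ℝ => C * (1-t) ^ r) volume 0 1 := by
    have h1 : IntervalIntegrable (fun x : ℝ => x ^ r) volume 0 1 :=
      intervalIntegral.intervalIntegrable_rpow' hr1
    simpa using (h1.comp_sub_left 1).symm.const_mul C
  have key : IntervalIntegrable (fun t : ℝ => (1-t^2)^r) volume 0 1 := by
    apply h2.mono_fun ((meas_aux ν).aestronglyMeasurable)
    rw [Filter.EventuallyLE, ae_restrict_iff' measurableSet_uIoc]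
    apply Filter.Eventually.of_forall
    intro t ht
    rw [Set.uIoc_of_le (by norm_num : (0:ℝ) ≤ 1)] at ht
    obtain ⟨h0, h1⟩ := ht
    have e1 : (1:ℝ) - t^2 = (1-t)*(1+t) := by ring
    have e2 : ((1:ℝ)-t^2) ^ r = (1-t)^r * (1+t)^r := by
      rw [e1, Real.mul_rpow (by linarith) (by linarith)]
    have e3 : (1+t) ^ r ≤ C := by
      rcases le_or_gt 0 r with h | h
      · exact le_trans (Real.rpow_le_rpow (by linarith) (by linarith) h) (le_max_right _ _)
      · refine le_trans ?_ hC1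
        exact Real.rpow_le_one_of_one_le_of_nonpos (by linarith) h.le
    have n1 : (0:ℝ) ≤ (1-t)^r := Real.rpow_nonneg (by linarith) r
    have n2 : (0:ℝ) ≤ (1-t^2)^r := Real.rpow_nonneg (by nlinarith) r
    rw [Real.norm_of_nonneg n2, Real.norm_of_nonneg (by positivity), e2]
    calc (1-t)^r * (1+t)^r ≤ (1-t)^r * C := by
          apply mul_le_mul_of_nonneg_left e3 n1
      _ = C * (1-t)^r := by ring
  have keyneg : IntervalIntegrable (fun t : ℝ => (1-t^2)^r) volume (-1) 0 := by
    have := (IntervalIntegrable.iff_comp_neg).mp key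
    simp only [neg_zero, neg_neg] at this
    have heq : (fun t : ℝ => (1-(-t)^2)^r) = (fun t : ℝ => (1-t^2)^r) := by
      funext t; ring_nf
    rw [heq] at this
    exact this.symm
  exact keyneg.trans key

lemma intInt' {ν : ℝ} (hν : -1/2 < ν) (m : ℕ) :
    IntervalIntegrable (fun t : ℝ => t^(2*m) * (1-t^2)^(ν-1/2)) volume (-1) 1 := by
  apply (intInt hν).mono_fun
  · exact ((measurable_id.pow_const (2*m)).mul (meas_aux ν)).aestronglyMeasurable
  · rw [Filter.EventuallyLE, ae_restrict_iff' measurableSet_uIoc]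
    apply Filter.Eventually.of_forall
    intro t ht
    rw [Set.uIoc_of_le (by norm_num : (-1:ℝ) ≤ 1)] at ht
    obtain ⟨h0, h1⟩ := ht
    rw [norm_mul]
    have h2 : ‖t^(2*m)‖ ≤ 1 := by
      rw [norm_pow]
      apply pow_le_one₀ (norm_nonneg t)
      rw [Real.norm_eq_abs, abs_le]; constructor <;> linarith
    nlinarith [norm_nonneg (t^(2*m)), norm_nonneg ((1-t^2)^(ν-1/2))]

lemma moment {ν : ℝ} (hν : -1/2 < ν) (m : ℕ) :
    ∫ t in (-1:ℝ)..1, t^(2*m) * (1-t^2)^(ν-1/2) =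
      Real.Gamma ((m:ℝ)+1/2) * Real.Gamma (ν+1/2) / Real.Gamma (ν+m+1) := by
  set f : ℝ → ℝ := fun t => t^(2*m) * (1-t^2)^(ν-1/2) with hf
  have hfull := intInt' hν m
  have heven : ∀ t, f (-t) = f t := by
    intro t; simp only [hf, Even.neg_pow (even_two_mul m), neg_sq]
  have hsub1 : IntervalIntegrable f volume (-1) 0 := by
    apply hfull.mono_set
    rw [Set.uIcc_of_le (by norm_num : (-1:ℝ) ≤ 0), Set.uIcc_of_le (by norm_num : (-1:ℝ) ≤ 1)]
    exact Set.Icc_subset_Icc (le_refl _) (by norm_num)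
  have hsub2 : IntervalIntegrable f volume 0 1 := by
    apply hfull.mono_set
    rw [Set.uIcc_of_le (by norm_num : (0:ℝ) ≤ 1), Set.uIcc_of_le (by norm_num : (-1:ℝ) ≤ 1)]
    exact Set.Icc_subset_Icc (by norm_num) (le_refl _)
  have hsplit : ∫ t in (-1:ℝ)..1, f t = (∫ t in (-1:ℝ)..0, f t) + ∫ t in (0:ℝ)..1, f t :=
    (intervalIntegral.integral_add_adjacent_intervals hsub1 hsub2).symm
  have hrefl : ∫ t in (-1:ℝ)..0, f t = ∫ t in (0:ℝ)..1, f t := by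
    have h := intervalIntegral.integral_comp_neg (a := 0) (b := 1) f
    simp only [neg_zero] at h
    rw [← h]
    apply intervalIntegral.integral_congr
    intro t _; exact heven t
  have himg : (fun t : ℝ => t^2) '' Set.Ioo 0 1 = Set.Ioo 0 1 := by
    ext x
    constructor
    · rintro ⟨t, ⟨h0, h1⟩, rfl⟩
      simp only [Set.mem_Ioo]
      exact ⟨by positivity, by nlinarith⟩
    · rintro ⟨h0, h1⟩
      refine ⟨Real.sqrt x, ⟨Real.sqrt_pos.mpr h0, ?_⟩, Real.sq_sqrt h0.le⟩
      have := Real.sqrt_lt_sqrt h0.le h1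
      simpa using this
  set g : ℝ → ℝ := fun x => (1/2) * (x ^ ((m:ℝ)-1/2) * (1-x) ^ (ν-1/2)) with hg
  have hcv : ∫ x in Set.Ioo (0:ℝ) 1, g x = ∫ t in Set.Ioo (0:ℝ) 1, |2*t| • g (t^2) := by
    conv_lhs => rw [← himg]
    apply integral_image_eq_integral_abs_deriv_smul measurableSet_Ioo
    · intro t _
      simpa using (hasDerivAt_pow 2 t).hasDerivWithinAt
    · intro a ha b hb h
      exact (pow_left_inj₀ ha.1.le hb.1.le (by norm_num)).mp h
  have hpt : ∀ t ∈ Set.Ioo (0:ℝ) 1, |2*t| • g (t^2) = f t := by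
    rintro t ⟨h0, h1⟩
    have habs : |2*t| = 2*t := abs_of_pos (by linarith)
    have e1 : ((t^2:ℝ)) ^ ((m:ℝ)-1/2) = t ^ (2*((m:ℝ)-1/2)) := by
      rw [← Real.rpow_natCast t 2, ← Real.rpow_mul h0.le]
      norm_num
    have e2 : (t:ℝ)^(2*m) = t * t ^ (2*((m:ℝ)-1/2)) := by
      rw [← Real.rpow_natCast t (2*m), show (((2*m:ℕ)):ℝ) = 1 + 2*((m:ℝ)-1/2) by push_cast; ring,
        Real.rpow_add h0, Real.rpow_one]
    simp only [smul_eq_mul, hg, hf, habs, e1, e2]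
    ring
  have hIocIoo : ∫ t in (0:ℝ)..1, f t = ∫ t in Set.Ioo (0:ℝ) 1, f t := by
    rw [intervalIntegral.integral_of_le (by norm_num), MeasureTheory.integral_Ioc_eq_integral_Ioo]
  have hbeta : ∫ x in Set.Ioo (0:ℝ) 1, g x =
      (1/2) * (Real.Gamma ((m:ℝ)+1/2) * Real.Gamma (ν+1/2) / Real.Gamma (ν+m+1)) := by
    rw [← MeasureTheory.integral_Ioc_eq_integral_Ioo,
      ← intervalIntegral.integral_of_le (by norm_num : (0:ℝ) ≤ 1), hg,
      intervalIntegral.integral_const_mul]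
    congr 1
    have hb := real_beta (a := (m:ℝ)+1/2) (b := ν+1/2) (by positivity) (by linarith)
    rw [show ((m:ℝ)+1/2) + (ν+1/2) = ν+m+1 by ring] at hb
    rw [← hb]
    apply intervalIntegral.integral_congr
    intro x _
    rw [show ((m:ℝ)+1/2)-1 = (m:ℝ)-1/2 by ring, show (ν+1/2)-1 = ν-1/2 by ring]
  have : ∫ t in Set.Ioo (0:ℝ) 1, f t =
      (1/2) * (Real.Gamma ((m:ℝ)+1/2) * Real.Gamma (ν+1/2) / Real.Gamma (ν+m+1)) := by
    rw [← hbeta, hcv]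
    exact setIntegral_congr_fun measurableSet_Ioo (fun t ht => (hpt t ht).symm)
  calc ∫ t in (-1:ℝ)..1, f t = 2 * ∫ t in Set.Ioo (0:ℝ) 1, f t := by
        rw [hsplit, hrefl, hIocIoo]; ring
    _ = _ := by rw [this]; ring

lemma poisson {ν : ℝ} (hν : -1/2 < ν) (x : ℝ) :
    ∫ t in (-1:ℝ)..1, (1-t^2)^(ν-1/2) * Real.cos (x*t) =
      Real.sqrt π * Real.Gamma (ν+1/2) *
        ∑' m : ℕ, (-1:ℝ)^m * (x^2/4)^m / (m.factorial * Real.Gamma (ν+m+1)) := by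
  set F : ℕ → ℝ → ℝ :=
    fun m t => ((-1:ℝ)^m * x^(2*m) / (2*m).factorial) * (t^(2*m) * (1-t^2)^(ν-1/2)) with hF
  -- pointwise sum
  have hsum : ∀ t : ℝ, ∑' m, F m t = (1-t^2)^(ν-1/2) * Real.cos (x*t) := by
    intro t
    rw [Real.cos_eq_tsum, ← tsum_mul_left]
    apply tsum_congr
    intro m
    rw [mul_pow]
    ring
  -- integrability on Ioo
  have hint : ∀ m : ℕ, IntegrableOn (F m) (Set.Ioo (-1:ℝ) 1) volume := by
    intro m
    have h1 : IntegrableOn (fun t : ℝ => t^(2*m) * (1-t^2)^(ν-1/2)) (Set.Ioo (-1:ℝ) 1) volume :=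
      ((intervalIntegrable_iff_integrableOn_Ioc_of_le
        (by norm_num)).mp (intInt' hν m)).mono_set Set.Ioo_subset_Ioc_self
    exact h1.const_mul _
  -- bound on the norms integral
  have hIone : ∀ m : ℕ, ∫ t in Set.Ioo (-1:ℝ) 1, ‖F m t‖ ≤
      (|x|^(2*m) / (2*m).factorial) * ∫ t in Set.Ioo (-1:ℝ) 1, (1-t^2)^(ν-1/2) := by
    intro m
    rw [← MeasureTheory.integral_const_mul]
    have hbase : IntegrableOn (fun t : ℝ => (1-t^2)^(ν-1/2)) (Set.Ioo (-1:ℝ) 1) volume :=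
      ((intervalIntegrable_iff_integrableOn_Ioc_of_le
        (by norm_num)).mp (intInt hν)).mono_set Set.Ioo_subset_Ioc_self
    refine setIntegral_mono_on (hint m).norm (Integrable.const_mul hbase _)
      measurableSet_Ioo ?_
    rintro t ⟨h0, h1⟩
    have hnn : (0:ℝ) ≤ (1-t^2)^(ν-1/2) := Real.rpow_nonneg (by nlinarith) _
    have ht2' : (0:ℝ) ≤ t^(2*m) := by rw [pow_mul]; positivity
    have ht2 : t^(2*m) ≤ 1 := by
      rw [pow_mul]; apply pow_le_one₀ (by positivity) (by nlinarith)
    have hn : ‖F m t‖ = (|x|^(2*m) / (2*m).factorial) * (t^(2*m) * (1-t^2)^(ν-1/2)) := by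
      rw [hF]
      simp only [norm_mul, norm_div, norm_pow, norm_neg, norm_one, one_pow, one_mul]
      rw [Real.norm_of_nonneg hnn,
        Real.norm_of_nonneg (by positivity : (0:ℝ) ≤ (((2*m).factorial : ℕ):ℝ)),
        Real.norm_eq_abs t, Real.norm_eq_abs x, pow_abs t, pow_abs x, abs_of_nonneg ht2']
    rw [hn]
    apply mul_le_mul_of_nonneg_left ?_ (by positivity)
    exact mul_le_of_le_one_left hnn ht2
  -- summability of integrals of norms
  have hsummable : Summable (fun m => ∫ t in Set.Ioo (-1:ℝ) 1, ‖F m t‖) := by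
    have h1 : Summable (fun m : ℕ => |x|^(2*m) / (2*m).factorial) := by
      have h2 := Real.summable_pow_div_factorial |x|
      exact h2.comp_injective (fun a b hab => by simpa using hab)
    exact Summable.of_nonneg_of_le
      (fun m => integral_nonneg (fun t => norm_nonneg _)) hIone (h1.mul_right _)
  have hkey := MeasureTheory.integral_tsum_of_summable_integral_norm hint hsummable
  have hIoo : ∫ t in (-1:ℝ)..1, (1-t^2)^(ν-1/2) * Real.cos (x*t) =
      ∫ t in Set.Ioo (-1:ℝ) 1, (1-t^2)^(ν-1/2) * Real.cos (x*t) := by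
    rw [intervalIntegral.integral_of_le (by norm_num),
      MeasureTheory.integral_Ioc_eq_integral_Ioo]
  have hterm : ∀ m : ℕ, ∫ t in Set.Ioo (-1:ℝ) 1, F m t =
      Real.sqrt π * Real.Gamma (ν+1/2) *
        ((-1:ℝ)^m * (x^2/4)^m / (m.factorial * Real.Gamma (ν+m+1))) := by
    intro m
    have : ∫ t in Set.Ioo (-1:ℝ) 1, F m t =
        ((-1:ℝ)^m * x^(2*m) / (2*m).factorial) *
          ∫ t in Set.Ioo (-1:ℝ) 1, t^(2*m) * (1-t^2)^(ν-1/2) := by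
      rw [hF, MeasureTheory.integral_const_mul]
    rw [this, ← MeasureTheory.integral_Ioc_eq_integral_Ioo,
      ← intervalIntegral.integral_of_le (by norm_num : (-1:ℝ) ≤ 1),
      moment hν m, gamma_half_nat m]
    have h4 : (((2*m).factorial : ℕ):ℝ) ≠ 0 := by positivity
    have h5 : ((m.factorial : ℕ):ℝ) ≠ 0 := by positivity
    have hmn : (0:ℝ) ≤ (m:ℝ) := Nat.cast_nonneg m
    have hg : Real.Gamma (ν+m+1) ≠ 0 := (Real.Gamma_pos_of_pos (by linarith)).ne'
    have hx4 : ((x:ℝ)^2/4)^m = x^(2*m) / 4^m := by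
      rw [div_pow, pow_mul]
    rw [hx4]
    have h44 : ((4:ℝ)^m) ≠ 0 := by positivity
    field_simp
  calc ∫ t in (-1:ℝ)..1, (1-t^2)^(ν-1/2) * Real.cos (x*t)
      = ∫ t in Set.Ioo (-1:ℝ) 1, ∑' m, F m t := by
        rw [hIoo]; exact integral_congr_ae (Filter.Eventually.of_forall
          (fun t => (hsum t).symm))
    _ = ∑' m, ∫ t in Set.Ioo (-1:ℝ) 1, F m t := hkey.symm
    _ = _ := by rw [tsum_congr hterm, tsum_mul_left]

lemma besselJ_eq {ν : ℝ} (hν : ν > -1/2) (x : ℝ) :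
    besselJ ν x = (x/2)^ν *
      ∑' m : ℕ, (-1:ℝ)^m * (x^2/4)^m / (m.factorial * Real.Gamma (ν+m+1)) := by
  rw [besselJ, ← tsum_mul_left]
  apply tsum_congr
  intro m
  rw [rpow_split (x/2) ν hν m, show ((x/2)^2 : ℝ) = x^2/4 by ring]
  ring

theorem besselJ_int_rep (ν y : ℝ) (hν : ν > -1/2) (hy : |y| < 1) :
    besselJ ν (π * y / 2) =
      (1 / (Real.sqrt π * Real.Gamma (ν + 1/2))) * (π * y / 4) ^ ν *
        (1 - y ^ 2) ^ (ν + 1/2) *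
        ∫ u in (-1 : ℝ)..1,
          (1 - u ^ 2) ^ (ν - 1/2) / (1 + u * y) ^ (2 * ν + 1) *
            Real.sin ((π / 2) * (1 - y ^ 2) / (1 + u * y)) := by
  have hy2 : y^2 < 1 := by nlinarith [abs_nonneg y, sq_abs y, abs_lt.mp hy]
  have hB : (0:ℝ) < 1 - y^2 := by linarith
  have hden : ∀ u : ℝ, u ∈ Set.Icc (-1:ℝ) 1 → 0 < 1 + u * y := by
    rintro u ⟨h0, h1⟩
    nlinarith [neg_abs_le (u*y), abs_mul u y, abs_nonneg u, abs_nonneg y,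
      abs_le.mpr ⟨h0, h1⟩]
  set φ : ℝ → ℝ := fun u => -(u+y)/(1+u*y) with hφ
  have hmem : ∀ u ∈ Set.Ioo (-1:ℝ) 1, φ u ∈ Set.Ioo (-1:ℝ) 1 := by
    rintro u ⟨h0, h1⟩
    have hd := hden u ⟨h0.le, h1.le⟩
    have key : 1 - (φ u)^2 = (1-u^2)*(1-y^2)/(1+u*y)^2 := by
      rw [hφ]; field_simp; ring
    have h1u : (0:ℝ) < 1 - u^2 := by nlinarith
    have hpos : (0:ℝ) < 1 - (φ u)^2 := by
      rw [key]; positivity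
    have habs := abs_lt.mp ((sq_lt_one_iff_abs_lt_one _).mp (by linarith : (φ u)^2 < 1))
    exact Set.mem_Ioo.mpr habs
  have hone : ∀ u ∈ Set.Ioo (-1:ℝ) 1, 1 + y * φ u = (1-y^2)/(1+u*y) := by
    rintro u ⟨h0, h1⟩
    have hd := hden u ⟨h0.le, h1.le⟩
    rw [hφ]; simp only [mul_div_assoc']; rw [add_div' _ _ _ hd.ne']; congr 1; ring
  have hinv : ∀ v ∈ Set.Ioo (-1:ℝ) 1, φ (φ v) = v := by
    rintro v hv
    have hd := hden v ⟨hv.1.le, hv.2.le⟩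
    have hd2 := hden (φ v) ⟨(hmem v hv).1.le, (hmem v hv).2.le⟩
    rw [hφ] at hd2 ⊢
    field_simp at hd2 ⊢
    rw [← neg_div, div_eq_iff (ne_of_gt (by linarith : (0:ℝ) < 1 + v * y + -(y * (v + y))))]
    ring
  have himg : φ '' Set.Ioo (-1:ℝ) 1 = Set.Ioo (-1:ℝ) 1 := by
    apply Set.Subset.antisymm
    · rintro x ⟨u, hu, rfl⟩
      exact hmem u hu
    · intro v hv
      exact ⟨φ v, hmem v hv, hinv v hv⟩
  have hderiv : ∀ u ∈ Set.Ioo (-1:ℝ) 1,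
      HasDerivWithinAt φ (-((1-y^2)/(1+u*y)^2)) (Set.Ioo (-1:ℝ) 1) u := by
    rintro u hu
    have hd := hden u ⟨hu.1.le, hu.2.le⟩
    have h1 : HasDerivAt (fun u : ℝ => -(u+y)) (-1) u := by
      exact ((hasDerivAt_id u).add_const y).neg
    have h2 : HasDerivAt (fun u : ℝ => 1+u*y) y u := by
      simpa using ((hasDerivAt_id u).mul_const y).const_add 1
    have hdd := h1.div h2 (ne_of_gt hd)
    have e : (-1 * (1+u*y) - -(u+y)*y)/(1+u*y)^2 = -((1-y^2)/(1+u*y)^2) := by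
      field_simp; ring
    exact (e ▸ hdd).hasDerivWithinAt
  have hinjOn : Set.InjOn φ (Set.Ioo (-1:ℝ) 1) := by
    intro a ha b hb h
    have := congrArg φ h
    rw [hinv a ha, hinv b hb] at this
    exact this
  -- change of variables
  set f : ℝ → ℝ := fun t => (1-t^2)^(ν-1/2) * Real.cos ((π*y/2)*t) with hfdef
  have hcv : ∫ t in Set.Ioo (-1:ℝ) 1, f t =
      ∫ u in Set.Ioo (-1:ℝ) 1, |(-((1-y^2)/(1+u*y)^2))| • f (φ u) := by
    conv_lhs => rw [← himg]
    exact integral_image_eq_integral_abs_deriv_smul measurableSet_Ioo hderiv hinjOn f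
  have hpt : ∀ u ∈ Set.Ioo (-1:ℝ) 1, |(-((1-y^2)/(1+u*y)^2))| • f (φ u) =
      (1-y^2)^(ν+1/2) * ((1-u^2)^(ν-1/2) / (1+u*y)^(2*ν+1) *
        Real.sin ((π/2) * (1-y^2) / (1+u*y))) := by
    rintro u hu
    obtain ⟨h0, h1⟩ := hu
    have hd := hden u ⟨h0.le, h1.le⟩
    have h1u : (0:ℝ) < 1 - u^2 := by nlinarith
    have habs : |(-((1-y^2)/(1+u*y)^2))| = (1-y^2)/(1+u*y)^2 := by
      rw [abs_neg, abs_of_pos (by positivity)]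
    have hkey : 1 - (φ u)^2 = (1-u^2)*(1-y^2)/(1+u*y)^2 := by
      rw [hφ]; field_simp; ring
    have hcos : Real.cos ((π*y/2) * φ u) = Real.sin ((π/2) * (1-y^2) / (1+u*y)) := by
      have e1 : (π/2) * (1-y^2) / (1+u*y) = π/2 + (π*y/2) * φ u := by
        have := hone u ⟨h0, h1⟩
        have e2 : (π/2) * (1-y^2) / (1+u*y) = (π/2) * ((1-y^2)/(1+u*y)) := by ring
        rw [e2, ← this]; ring
      rw [e1, Real.sin_add, Real.sin_pi_div_two, Real.cos_pi_div_two]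
      ring
    have hrpow : (1 - (φ u)^2)^(ν-1/2) =
        (1-u^2)^(ν-1/2) * (1-y^2)^(ν-1/2) / ((1+u*y)^2)^(ν-1/2) := by
      rw [hkey, Real.div_rpow (by positivity) (by positivity),
        Real.mul_rpow h1u.le hB.le]
    have hCpow : ((1+u*y)^2 : ℝ)^(ν-1/2) * (1+u*y)^(2:ℕ) = (1+u*y)^(2*ν+1) := by
      rw [← Real.rpow_natCast (1+u*y) 2, ← Real.rpow_mul hd.le, ← Real.rpow_add hd]
      congr 1
      push_cast
      ring
    have hCr : (0:ℝ) < ((1+u*y)^2)^(ν-1/2) := Real.rpow_pos_of_pos (by positivity) _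
    have hBp : (1-y^2)^(ν+1/2) = (1-y^2)^(ν-1/2) * (1-y^2) := by
      rw [show ν+1/2 = (ν-1/2)+1 by ring, Real.rpow_add hB, Real.rpow_one]
    have hCp : (1+u*y)^(2*ν+1) = ((1+u*y)^2)^(ν-1/2) * (1+u*y)^2 := hCpow.symm
    rw [smul_eq_mul, habs]
    simp only [hfdef]
    rw [hrpow, hcos, hBp, hCp]
    field_simp
  have hfin : ∫ t in (-1:ℝ)..1, (1-t^2)^(ν-1/2) * Real.cos ((π*y/2)*t) =
      (1-y^2)^(ν+1/2) * ∫ u in (-1:ℝ)..1,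
        (1-u^2)^(ν-1/2)/(1+u*y)^(2*ν+1) * Real.sin (π/2*(1-y^2)/(1+u*y)) := by
    have h1 : ∫ t in (-1:ℝ)..1, f t = ∫ t in Set.Ioo (-1:ℝ) 1, f t := by
      rw [intervalIntegral.integral_of_le (by norm_num),
        MeasureTheory.integral_Ioc_eq_integral_Ioo]
    have h2 := setIntegral_congr_fun (μ := volume) measurableSet_Ioo hpt
    have h3 : ∫ u in Set.Ioo (-1:ℝ) 1,
        (1-y^2)^(ν+1/2) * ((1-u^2)^(ν-1/2)/(1+u*y)^(2*ν+1) *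
          Real.sin (π/2*(1-y^2)/(1+u*y))) =
        (1-y^2)^(ν+1/2) * ∫ u in Set.Ioo (-1:ℝ) 1,
          (1-u^2)^(ν-1/2)/(1+u*y)^(2*ν+1) * Real.sin (π/2*(1-y^2)/(1+u*y)) :=
      MeasureTheory.integral_const_mul _ _
    have h4 : ∫ u in Set.Ioo (-1:ℝ) 1,
        (1-u^2)^(ν-1/2)/(1+u*y)^(2*ν+1) * Real.sin (π/2*(1-y^2)/(1+u*y)) =
        ∫ u in (-1:ℝ)..1,
          (1-u^2)^(ν-1/2)/(1+u*y)^(2*ν+1) * Real.sin (π/2*(1-y^2)/(1+u*y)) := by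
      rw [intervalIntegral.integral_of_le (by norm_num),
        MeasureTheory.integral_Ioc_eq_integral_Ioo]
    show ∫ t in (-1:ℝ)..1, f t = _
    rw [h1, hcv, h2, h3, h4]
  have hGpos : (0:ℝ) < Real.sqrt π * Real.Gamma (ν+1/2) :=
    mul_pos (Real.sqrt_pos.mpr pi_pos) (Real.Gamma_pos_of_pos (by linarith))
  have hp := poisson (by linarith : -1/2 < ν) (π*y/2)
  have hS : (∑' m : ℕ, (-1:ℝ)^m * ((π*y/2)^2/4)^m / (m.factorial * Real.Gamma (ν+m+1))) =
      (∫ t in (-1:ℝ)..1, (1-t^2)^(ν-1/2) * Real.cos ((π*y/2)*t)) /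
        (Real.sqrt π * Real.Gamma (ν+1/2)) := by
    rw [hp, mul_div_cancel_left₀ _ (ne_of_gt hGpos)]
  rw [besselJ_eq hν, show (π*y/2)/2 = π*y/4 by ring, hS, hfin]
  field_simp
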